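/- Suppose W is doubly stochastic with spectral norm ρ_w := ‖W − (1/N)·11ᵀ‖₂ satisfying ρ_w ∈ (0,1), each J_i(·,θ_m) is L-Lipschitz smooth, each q_i^{(t)} is a probability vector in ℝ^M, and q̃ is a fixed probability vector in ℝ^M. Then the consensus error satisfies, for every t, ‖x^{(t+1)} − 1·x̄^{(t+1)}‖² ≤ ((3 + ρ_w²)/4)·‖x^{(t)} − 1·x̄^{(t)}‖² + (3ρ_w²(α^{(t)})²/(1 − ρ_w²)) · [2M²L²·‖x^{(t)} − 1·x*(q̃)‖² + 2M·∑_{i=1}^{N} ‖∇_x 𝐉_i(x*(q̃),θ)‖²]. -/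

import Mathlib

set_option maxHeartbeats 1000000

lemma specbound {n : ℕ} (A : Matrix (Fin n) (Fin n) ℝ) (y : Fin n → ℝ) :
    ∑ i, (∑ j, A i j * y j) ^ 2 ≤
      ‖Matrix.toEuclideanCLM (𝕜 := ℝ) A‖ ^ 2 * ∑ j, (y j) ^ 2 := by
  set v : EuclideanSpace ℝ (Fin n) := (WithLp.equiv _ _).symm y with hv
  have h1 : ‖Matrix.toEuclideanCLM (𝕜 := ℝ) A v‖ ≤ ‖Matrix.toEuclideanCLM (𝕜 := ℝ) A‖ * ‖v‖ :=
    (Matrix.toEuclideanCLM (𝕜 := ℝ) A).le_opNorm v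
  have h2 : Matrix.toEuclideanCLM (𝕜 := ℝ) A v =
      (WithLp.equiv _ _).symm (A.mulVec y) := by
    rw [hv]; rfl
  have hnv : ‖v‖ ^ 2 = ∑ j, (y j) ^ 2 := by
    rw [EuclideanSpace.norm_eq, Real.sq_sqrt (by positivity)]
    rw [hv]; simp only [WithLp.equiv_symm_apply, WithLp.ofLp_toLp, Real.norm_eq_abs, sq_abs]
  have hnAv : ‖Matrix.toEuclideanCLM (𝕜 := ℝ) A v‖ ^ 2 = ∑ i, (∑ j, A i j * y j) ^ 2 := by
    rw [h2, EuclideanSpace.norm_eq, Real.sq_sqrt (by positivity)]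
    simp only [WithLp.equiv_symm_apply, WithLp.ofLp_toLp, Real.norm_eq_abs, sq_abs, Matrix.mulVec, dotProduct]
  calc ∑ i, (∑ j, A i j * y j) ^ 2 = ‖Matrix.toEuclideanCLM (𝕜 := ℝ) A v‖ ^ 2 := hnAv.symm
    _ ≤ (‖Matrix.toEuclideanCLM (𝕜 := ℝ) A‖ * ‖v‖) ^ 2 := by
        apply sq_le_sq' (by nlinarith [norm_nonneg (Matrix.toEuclideanCLM (𝕜 := ℝ) A v), norm_nonneg (Matrix.toEuclideanCLM (𝕜 := ℝ) A), norm_nonneg v]) h1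
    _ = ‖Matrix.toEuclideanCLM (𝕜 := ℝ) A‖ ^ 2 * ∑ j, (y j) ^ 2 := by rw [mul_pow, hnv]

/-- One-step recursion for the consensus error
`‖x^{(t+1)} − 1·x̄^{(t+1)}‖²` of the distributed gradient descent step, where
`ρ_w = ‖W − (1/N)·11ᵀ‖₂ ∈ (0,1)` is the spectral norm. -/
theorem stmt9 (N M : ℕ) (hN : 0 < N) (hM : 0 < M)
    (W : Matrix (Fin N) (Fin N) ℝ)
    (hWnonneg : ∀ i j, 0 ≤ W i j)
    (hWrow : ∀ i, ∑ j, W i j = 1)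
    (hWcol : ∀ j, ∑ i, W i j = 1)
    (ρw : ℝ)
    (hρw : ρw = ‖Matrix.toEuclideanCLM (𝕜 := ℝ)
      (W - (Matrix.of (fun _ _ => (1 : ℝ) / N) : Matrix (Fin N) (Fin N) ℝ))‖)
    (hρw01 : 0 < ρw ∧ ρw < 1)
    (J : Fin N → ℝ → Fin M → ℝ) (L : ℝ) (hL : 0 < L)
    (hdiff : ∀ (i : Fin N) (m : Fin M), Differentiable ℝ (fun z => J i z m))
    (hlip : ∀ (i : Fin N) (m : Fin M) (x x' : ℝ),
      |deriv (fun z => J i z m) x' - deriv (fun z => J i z m) x| ≤ L * |x' - x|)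
    (α : ℕ → ℝ)
    (q : ℕ → Fin N → Fin M → ℝ)                        -- beliefs (probability vectors)
    (hqprob : ∀ t i, (∀ m, 0 ≤ q t i m) ∧ (∑ m, q t i m = 1))
    (qt : Fin M → ℝ)                                   -- the fixed probability vector q̃
    (hqtprob : (∀ m, 0 ≤ qt m) ∧ (∑ m, qt m = 1))
    (x : ℕ → Fin N → ℝ)                                -- decisions
    (hx : ∀ t i, x (t + 1) i =
      ∑ j, W i j * (x t j - α t * ∑ m, q t j m * deriv (fun z => J j z m) (x t j)))
    (xstar : ℝ)                                        -- x*(q̃)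
    (hxstar : ∀ z : ℝ, (1 / (N : ℝ)) * ∑ i, ∑ m, qt m * J i xstar m ≤
      (1 / (N : ℝ)) * ∑ i, ∑ m, qt m * J i z m) :
    ∀ t : ℕ,
      ∑ i, (x (t + 1) i - (1 / (N : ℝ)) * ∑ k, x (t + 1) k) ^ 2 ≤
        ((3 + ρw ^ 2) / 4) * ∑ i, (x t i - (1 / (N : ℝ)) * ∑ k, x t k) ^ 2 +
        (3 * ρw ^ 2 * (α t) ^ 2 / (1 - ρw ^ 2)) *
          (2 * (M : ℝ) ^ 2 * L ^ 2 * (∑ i, (x t i - xstar) ^ 2) +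
            2 * (M : ℝ) * ∑ i, ∑ m, (deriv (fun z => J i z m) xstar) ^ 2) := by
  intro t
  obtain ⟨hρ0, hρ1⟩ := hρw01
  have hNR : (0 : ℝ) < (N : ℝ) := by exact_mod_cast hN
  have hMR : (1 : ℝ) ≤ (M : ℝ) := by exact_mod_cast hM
  set g : Fin N → ℝ := fun j => ∑ m, q t j m * deriv (fun z => J j z m) (x t j) with hg
  set xb : ℝ := (1 / (N : ℝ)) * ∑ k, x t k with hxb
  set z : Fin N → ℝ := fun j => x t j - α t * g j with hz
  set y : Fin N → ℝ := fun j => z j - xb with hy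
  set A : Matrix (Fin N) (Fin N) ℝ :=
    W - (Matrix.of (fun _ _ => (1 : ℝ) / N) : Matrix (Fin N) (Fin N) ℝ) with hAdef
  -- new average
  have hsum1 : ∑ k, x (t + 1) k = ∑ j, z j := by
    simp only [hx t]
    rw [Finset.sum_comm]
    refine Finset.sum_congr rfl fun j _ => ?_
    rw [← Finset.sum_mul, hWcol j, one_mul]
  -- Step A : consensus error as matrix-vector product
  have hA : ∀ i, x (t + 1) i - (1 / (N : ℝ)) * ∑ k, x (t + 1) k = ∑ j, A i j * y j := by
    intro i
    rw [hsum1, hx t]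
    have : ∀ j, A i j * y j
        = W i j * z j - W i j * xb - (1 / (N : ℝ)) * z j + (1 / (N : ℝ)) * xb := by
      intro j
      simp only [hAdef, Matrix.sub_apply, Matrix.of_apply, hy]
      ring
    rw [Finset.sum_congr rfl fun j _ => this j]
    have e1 : ∑ j, (W i j * z j - W i j * xb - (1 / (N : ℝ)) * z j + (1 / (N : ℝ)) * xb)
        = (∑ j, W i j * z j) - (∑ j, W i j) * xb - (1 / (N : ℝ)) * (∑ j, z j)
          + (N : ℝ) * ((1 / (N : ℝ)) * xb) := by
      rw [Finset.sum_add_distrib, Finset.sum_sub_distrib, Finset.sum_sub_distrib,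
        Finset.sum_const, ← Finset.sum_mul, ← Finset.mul_sum]
      simp [nsmul_eq_mul]
    rw [e1, hWrow i]
    have : (N : ℝ) ≠ 0 := ne_of_gt hNR
    field_simp
    ring
  -- Step B : spectral bound
  have hB : ∑ i, (x (t + 1) i - (1 / (N : ℝ)) * ∑ k, x (t + 1) k) ^ 2
      ≤ ρw ^ 2 * ∑ j, (y j) ^ 2 := by
    rw [Finset.sum_congr rfl fun i _ => by rw [hA i]]
    rw [hρw]
    exact specbound A y
  -- Step C : Young's inequality with η
  set η : ℝ := (1 - ρw ^ 2) / (2 * ρw ^ 2) with hηdef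
  have hρsq : 0 < ρw ^ 2 := by positivity
  have hρsq1 : ρw ^ 2 < 1 := by nlinarith
  have hη : 0 < η := by
    apply div_pos (by linarith) (by linarith)
  have hC : ∑ j, (y j) ^ 2 ≤ (1 + η) * (∑ j, (x t j - xb) ^ 2)
      + (1 + 1/η) * (α t) ^ 2 * ∑ j, (g j) ^ 2 := by
    have hpt : ∀ j, (y j) ^ 2 ≤ (1 + η) * (x t j - xb) ^ 2 + (1 + 1/η) * (α t * g j) ^ 2 := by
      intro j
      have hyj : y j = (x t j - xb) - α t * g j := by simp [hy, hz]; ring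
      rw [hyj]
      have h1 : 0 < η := hη
      have key : (0:ℝ) ≤ (η * (x t j - xb) + (α t * g j)) ^ 2 := sq_nonneg _
      have h1η : (0:ℝ) < 1/η := by positivity
      have hinv : η * (1/η) = 1 := mul_one_div_cancel (ne_of_gt h1)
      nlinarith [key, h1, h1η, hinv]
    calc ∑ j, (y j) ^ 2 ≤ ∑ j, ((1 + η) * (x t j - xb) ^ 2 + (1 + 1/η) * (α t * g j) ^ 2) :=
          Finset.sum_le_sum fun j _ => hpt j
      _ = (1 + η) * (∑ j, (x t j - xb) ^ 2) + (1 + 1/η) * (α t) ^ 2 * ∑ j, (g j) ^ 2 := by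
          have e2 : ∀ j : Fin N, (1 + 1/η) * (α t * g j) ^ 2
              = ((1 + 1/η) * (α t) ^ 2) * (g j) ^ 2 := fun j => by ring
          rw [Finset.sum_add_distrib, ← Finset.mul_sum,
            Finset.sum_congr rfl fun j _ => e2 j, ← Finset.mul_sum]
  -- Step D : gradient bound
  have hD : ∀ i, (g i) ^ 2 ≤ 2 * L ^ 2 * (x t i - xstar) ^ 2
      + 2 * ∑ m, (deriv (fun z => J i z m) xstar) ^ 2 := by
    intro i
    set D : Fin M → ℝ := fun m => deriv (fun z => J i z m) (x t i) with hD1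
    set d : Fin M → ℝ := fun m => deriv (fun z => J i z m) xstar with hd1
    obtain ⟨hq0, hq1⟩ := hqprob t i
    have hgi : g i = (∑ m, q t i m * (D m - d m)) + ∑ m, q t i m * d m := by
      rw [hg, ← Finset.sum_add_distrib]
      refine Finset.sum_congr rfl fun m _ => by ring
    have hu : |∑ m, q t i m * (D m - d m)| ≤ L * |x t i - xstar| := by
      calc |∑ m, q t i m * (D m - d m)| ≤ ∑ m, |q t i m * (D m - d m)| :=
            Finset.abs_sum_le_sum_abs _ _
        _ = ∑ m, q t i m * |D m - d m| := by
            refine Finset.sum_congr rfl fun m _ => ?_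
            rw [abs_mul, abs_of_nonneg (hq0 m)]
        _ ≤ ∑ m, q t i m * (L * |x t i - xstar|) := by
            refine Finset.sum_le_sum fun m _ => ?_
            exact mul_le_mul_of_nonneg_left (hlip i m xstar (x t i)) (hq0 m)
        _ = L * |x t i - xstar| := by rw [← Finset.sum_mul, hq1, one_mul]
    have hs : (∑ m, q t i m * d m) ^ 2 ≤ ∑ m, (d m) ^ 2 := by
      have c1 : (∑ m, q t i m * d m) ^ 2 ≤ (∑ m, (q t i m) ^ 2) * ∑ m, (d m) ^ 2 :=
        Finset.sum_mul_sq_le_sq_mul_sq _ _ _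
      have c2 : ∑ m, (q t i m) ^ 2 ≤ 1 := by
        calc ∑ m, (q t i m) ^ 2 ≤ (∑ m, q t i m) ^ 2 :=
              Finset.sum_sq_le_sq_sum_of_nonneg fun m _ => hq0 m
          _ = 1 := by rw [hq1]; norm_num
      have c3 : (0 : ℝ) ≤ ∑ m, (d m) ^ 2 := by positivity
      nlinarith
    set u : ℝ := ∑ m, q t i m * (D m - d m) with hu1
    set sv : ℝ := ∑ m, q t i m * d m with hsv1
    have hu2 : u ^ 2 ≤ L ^ 2 * (x t i - xstar) ^ 2 := by
      have h3 := pow_le_pow_left₀ (abs_nonneg u) hu 2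
      calc u ^ 2 = |u| ^ 2 := (sq_abs _).symm
        _ ≤ (L * |x t i - xstar|) ^ 2 := h3
        _ = L ^ 2 * (x t i - xstar) ^ 2 := by rw [mul_pow, sq_abs]
    rw [hgi]
    nlinarith [sq_nonneg (u - sv), hu2, hs]
  -- sum version of Step D
  have hDsum : ∑ i, (g i) ^ 2 ≤
      2 * (M : ℝ) ^ 2 * L ^ 2 * (∑ i, (x t i - xstar) ^ 2) +
        2 * (M : ℝ) * ∑ i, ∑ m, (deriv (fun z => J i z m) xstar) ^ 2 := by
    have h1 : ∑ i, (g i) ^ 2 ≤ ∑ i, (2 * L ^ 2 * (x t i - xstar) ^ 2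
        + 2 * ∑ m, (deriv (fun z => J i z m) xstar) ^ 2) :=
      Finset.sum_le_sum fun i _ => hD i
    have h2 : ∑ i, (2 * L ^ 2 * (x t i - xstar) ^ 2
        + 2 * ∑ m, (deriv (fun z => J i z m) xstar) ^ 2)
        = 2 * L ^ 2 * (∑ i, (x t i - xstar) ^ 2)
          + 2 * ∑ i, ∑ m, (deriv (fun z => J i z m) xstar) ^ 2 := by
      rw [Finset.sum_add_distrib, ← Finset.mul_sum, ← Finset.mul_sum]
    set S1 : ℝ := ∑ i, (x t i - xstar) ^ 2 with hS1def
    set S2 : ℝ := ∑ i, ∑ m, (deriv (fun z => J i z m) xstar) ^ 2 with hS2def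
    have hS1 : (0:ℝ) ≤ S1 := by positivity
    have hS2 : (0:ℝ) ≤ S2 := by positivity
    have hM2 : (1:ℝ) ≤ (M:ℝ) ^ 2 := by nlinarith
    have k1 : 2 * L ^ 2 * S1 ≤ 2 * (M:ℝ) ^ 2 * L ^ 2 * S1 := by nlinarith [mul_nonneg (mul_nonneg (sub_nonneg.mpr hM2) (sq_nonneg L)) hS1]
    have k2 : 2 * S2 ≤ 2 * (M:ℝ) * S2 := by nlinarith [mul_nonneg (by linarith : (0:ℝ) ≤ (M:ℝ) - 1) hS2]
    rw [h2] at h1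
    linarith
  -- collect
  set E : ℝ := ∑ j, (x t j - xb) ^ 2 with hE
  set Gg : ℝ := ∑ j, (g j) ^ 2 with hGg
  set G : ℝ := 2 * (M : ℝ) ^ 2 * L ^ 2 * (∑ i, (x t i - xstar) ^ 2) +
      2 * (M : ℝ) * ∑ i, ∑ m, (deriv (fun z => J i z m) xstar) ^ 2 with hGdef
  have hEnn : 0 ≤ E := by positivity
  have hGgnn : 0 ≤ Gg := by positivity
  have hGnn : 0 ≤ G := le_trans hGgnn hDsum
  have hchain : ∑ i, (x (t + 1) i - (1 / (N : ℝ)) * ∑ k, x (t + 1) k) ^ 2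
      ≤ ρw ^ 2 * (1 + η) * E + ρw ^ 2 * (1 + 1/η) * (α t) ^ 2 * Gg := by
    calc ∑ i, (x (t + 1) i - (1 / (N : ℝ)) * ∑ k, x (t + 1) k) ^ 2
        ≤ ρw ^ 2 * ∑ j, (y j) ^ 2 := hB
      _ ≤ ρw ^ 2 * ((1 + η) * E + (1 + 1/η) * (α t) ^ 2 * Gg) :=
          mul_le_mul_of_nonneg_left hC (le_of_lt hρsq)
      _ = ρw ^ 2 * (1 + η) * E + ρw ^ 2 * (1 + 1/η) * (α t) ^ 2 * Gg := by ring
  have hc1 : ρw ^ 2 * (1 + η) = (1 + ρw ^ 2) / 2 := by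
    rw [hηdef]; field_simp; ring
  have hc2 : ρw ^ 2 * (1 + 1/η) = ρw ^ 2 * (1 + ρw ^ 2) / (1 - ρw ^ 2) := by
    rw [hηdef]
    have h1 : (1 : ℝ) - ρw ^ 2 ≠ 0 := by linarith
    field_simp
    ring
  have hfin1 : ρw ^ 2 * (1 + η) * E ≤ (3 + ρw ^ 2) / 4 * E := by
    apply mul_le_mul_of_nonneg_right _ hEnn
    rw [hc1]; linarith
  have hfin2 : ρw ^ 2 * (1 + 1/η) * (α t) ^ 2 * Gg
      ≤ 3 * ρw ^ 2 * (α t) ^ 2 / (1 - ρw ^ 2) * G := by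
    have hcoef : ρw ^ 2 * (1 + 1/η) * (α t) ^ 2 ≤ 3 * ρw ^ 2 * (α t) ^ 2 / (1 - ρw ^ 2) := by
      rw [hc2]
      rw [div_mul_eq_mul_div, div_le_div_iff₀ (by linarith) (by linarith)]
      nlinarith [mul_nonneg (mul_nonneg (le_of_lt hρsq) (sq_nonneg (α t)))
        (by linarith : (0:ℝ) ≤ 1 - ρw ^ 2),
        (by linarith : (0:ℝ) ≤ 2 - ρw ^ 2)]
    have hcoefnn : 0 ≤ ρw ^ 2 * (1 + 1/η) * (α t) ^ 2 := by positivity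
    calc ρw ^ 2 * (1 + 1/η) * (α t) ^ 2 * Gg
        ≤ ρw ^ 2 * (1 + 1/η) * (α t) ^ 2 * G := mul_le_mul_of_nonneg_left hDsum hcoefnn
      _ ≤ 3 * ρw ^ 2 * (α t) ^ 2 / (1 - ρw ^ 2) * G := mul_le_mul_of_nonneg_right hcoef hGnn
  calc ∑ i, (x (t + 1) i - (1 / (N : ℝ)) * ∑ k, x (t + 1) k) ^ 2
      ≤ ρw ^ 2 * (1 + η) * E + ρw ^ 2 * (1 + 1/η) * (α t) ^ 2 * Gg := hchain
    _ ≤ (3 + ρw ^ 2) / 4 * E + 3 * ρw ^ 2 * (α t) ^ 2 / (1 - ρw ^ 2) * G :=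
        add_le_add hfin1 hfin2
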